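/- Let D be an integral domain. For every nonzero finitely generated fractional ideal F of D and every prime ideal P of D, we have (F D_P)^{v_{D_P}} = (F^{v_D} D_P)^{v_{D_P}}, where v_R(E) := (R : (R : E)). -/

import Mathlib

open Pointwise

section Preamble

variable (D : Type*) [CommRing D] [IsDomain D]
variable (K : Type*) [Field K] [Algebra D K] [IsFractionRing D K]

/-- The localization `D_P` of `D` at a prime `P`, as a subalgebra of the quotient field. -/
noncomputable def locAt (P : Ideal D) (hP : P.IsPrime) : Subalgebra D K :=
  Localization.subalgebra K P.primeCompl
    (fun x hx => mem_nonZeroDivisors_of_ne_zero (fun h0 : x = 0 => hx (h0 ▸ P.zero_mem)))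

/-- `D_P` as a `D`-submodule of the quotient field. -/
noncomputable def locAtM (P : Ideal D) (hP : P.IsPrime) : Submodule D K :=
  Subalgebra.toSubmodule (locAt D K P hP)

variable {D K}

/-- `E` is finitely generated as a module over the subring corresponding to `Rm`. -/
def IsRFG (Rm E : Submodule D K) : Prop :=
  ∃ F₀ : Submodule D K, F₀.FG ∧ F₀ ≠ ⊥ ∧ E = F₀ * Rm

/-- `s` is a semistar operation on the subring corresponding to `Rm`
(on `D` itself when `Rm = 1`): it is defined on the nonzero `Rm`-submodules of `K`. -/
def IsSemistar (Rm : Submodule D K) (s : Submodule D K → Submodule D K) : Prop :=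
  (∀ E, E ≠ ⊥ → Rm * E ≤ E → Rm * s E ≤ s E) ∧
  (∀ (x : K) (E), x ≠ 0 → E ≠ ⊥ → Rm * E ≤ E → s (x • E) = x • s E) ∧
  (∀ E F, E ≠ ⊥ → F ≠ ⊥ → Rm * E ≤ E → Rm * F ≤ F → E ≤ F → s E ≤ s F) ∧
  (∀ E, E ≠ ⊥ → Rm * E ≤ E → E ≤ s E) ∧
  (∀ E, E ≠ ⊥ → Rm * E ≤ E → s (s E) = s E)

/-- `s` is of finite type. -/
def IsFiniteType (Rm : Submodule D K) (s : Submodule D K → Submodule D K) : Prop :=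
  ∀ E, E ≠ ⊥ → Rm * E ≤ E → s E = sSup {G | ∃ F, IsRFG Rm F ∧ F ≤ E ∧ G = s F}

/-- `s` is a.b. -/
def IsAB (Rm : Submodule D K) (s : Submodule D K → Submodule D K) : Prop :=
  ∀ F G H : Submodule D K, IsRFG Rm F → G ≠ ⊥ → Rm * G ≤ G → H ≠ ⊥ → Rm * H ≤ H →
    s (F * G) ≤ s (F * H) → s G ≤ s H

/-- `s` is e.a.b. -/
def IsEAB (Rm : Submodule D K) (s : Submodule D K → Submodule D K) : Prop :=
  ∀ F G H : Submodule D K, IsRFG Rm F → IsRFG Rm G → IsRFG Rm H →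
    s (F * G) ≤ s (F * H) → s G ≤ s H

/-- `s` is stable. -/
def IsStable (Rm : Submodule D K) (s : Submodule D K → Submodule D K) : Prop :=
  ∀ E F, E ≠ ⊥ → F ≠ ⊥ → Rm * E ≤ E → Rm * F ≤ F → s (E ⊓ F) = s E ⊓ s F

/-- The divisorial closure `E ↦ (R : (R : E))` over the subring corresponding to `Rm`. -/
def vOp (Rm E : Submodule D K) : Submodule D K := Rm / (Rm / E)

/-- The `t`-operation over the subring corresponding to `Rm`. -/
def tOp (Rm E : Submodule D K) : Submodule D K :=
  sSup {G | ∃ F, IsRFG Rm F ∧ F ≤ E ∧ G = vOp Rm F}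

end Preamble

variable {D : Type*} [CommRing D] [IsDomain D]
variable {K : Type*} [Field K] [Algebra D K] [IsFractionRing D K]

lemma mem_locAtM_iff {P : Ideal D} {hP : P.IsPrime} {x : K} :
    x ∈ locAtM D K P hP ↔ ∃ (a s : D) (hs : s ∈ P.primeCompl),
      x = IsLocalization.mk' K a
        ⟨s, mem_nonZeroDivisors_of_ne_zero (fun h0 : s = 0 => hs (h0 ▸ P.zero_mem))⟩ :=
  Iff.rfl

lemma locDiv_anti {I E E' : Submodule D K} (h : E ≤ E') : I / E' ≤ I / E :=
  fun _ hx => Submodule.mem_div_iff_forall_mul_mem.mpr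
    (fun y hy => Submodule.mem_div_iff_forall_mul_mem.mp hx y (h hy))

/-- Dividing `Rm` by `E * Rm` is the same as dividing by `E`, when `Rm` comes from a
subalgebra. -/
lemma div_mul_locAtM (P : Ideal D) (hP : P.IsPrime) (E : Submodule D K) :
    locAtM D K P hP / (E * locAtM D K P hP) = locAtM D K P hP / E := by
  apply le_antisymm
  · apply locDiv_anti
    calc E = E * 1 := (mul_one E).symm
    _ ≤ E * locAtM D K P hP :=
      mul_le_mul' le_rfl (Submodule.one_le.mpr (locAt D K P hP).one_mem)
  · intro x hx
    rw [Submodule.mem_div_iff_forall_mul_mem] at hx ⊢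
    intro y hy
    refine Submodule.mul_induction_on hy (fun e he r hr => ?_) (fun a b ha hb => ?_)
    · have : x * (e * r) = (x * e) * r := by ring
      rw [this]
      exact (locAt D K P hP).mul_mem (hx e he) hr
    · rw [mul_add]; exact Submodule.add_mem _ ha hb

/-- Common denominator for finitely many elements of `D_P`. -/
lemma exists_denom (P : Ideal D) (hP : P.IsPrime) (x : K) (s : Finset K)
    (hx : ∀ y ∈ s, x * y ∈ locAtM D K P hP) :
    ∃ t ∈ P.primeCompl, ∀ y ∈ s, algebraMap D K t * (x * y) ∈ (1 : Submodule D K) := by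
  classical
  induction s using Finset.induction_on with
  | empty => exact ⟨1, Submonoid.one_mem _, fun y hy => absurd hy (by simp)⟩
  | insert _ _ hnotmem ih =>
    rename_i c s'
    obtain ⟨t₁, ht₁, h₁⟩ := ih (fun y hy => hx y (Finset.mem_insert_of_mem hy))
    have hc : x * c ∈ locAtM D K P hP := hx c (Finset.mem_insert_self _ _)
    rw [mem_locAtM_iff] at hc
    obtain ⟨a, t₂, ht₂, hmk⟩ := hc
    refine ⟨t₂ * t₁, Submonoid.mul_mem _ ht₂ ht₁, fun y hy => ?_⟩
    rcases Finset.mem_insert.mp hy with rfl | hy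
    · rw [Submodule.one_eq_range]
      refine ⟨t₁ * a, ?_⟩
      have hspec := IsLocalization.mk'_spec K a
        ⟨t₂, mem_nonZeroDivisors_of_ne_zero
          (fun h0 : t₂ = 0 => ht₂ (h0 ▸ P.zero_mem))⟩
      simp only [Algebra.linearMap_apply, map_mul]
      rw [hmk]
      rw [mul_comm (algebraMap D K t₂) (algebraMap D K t₁), mul_assoc]
      rw [mul_comm (IsLocalization.mk' K a _) (algebraMap D K t₂)] at hspec
      rw [hspec]
    · have := h₁ y hy
      rw [Submodule.one_eq_range] at this ⊢
      obtain ⟨b, hb⟩ := this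
      refine ⟨t₂ * b, ?_⟩
      simp only [Algebra.linearMap_apply, map_mul] at hb ⊢
      rw [mul_assoc, ← hb]

/-- Key lemma: `(Rₚ : F) = (Rₚ : F^{v_D})` for `F` finitely generated. -/
lemma div_vOp_eq (F : Submodule D K) (hFG : F.FG) (P : Ideal D) (hP : P.IsPrime) :
    locAtM D K P hP / F = locAtM D K P hP / vOp 1 F := by
  apply le_antisymm
  · intro x hx
    rw [Submodule.mem_div_iff_forall_mul_mem] at hx ⊢
    obtain ⟨s, rfl⟩ := hFG
    obtain ⟨t, ht, hmain⟩ := exists_denom P hP x s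
      (fun y hy => hx y (Submodule.subset_span hy))
    -- `t • x ∈ 1 / F`
    have htx : algebraMap D K t * x ∈ (1 : Submodule D K) / Submodule.span D (s : Set K) := by
      rw [Submodule.mem_div_iff_forall_mul_mem]
      have hle : Submodule.span D (s : Set K) ≤
          (1 : Submodule D K).comap (LinearMap.mulLeft D (algebraMap D K t * x)) :=
        Submodule.span_le.mpr fun y hy => Submodule.mem_comap.mpr (by
          rw [LinearMap.mulLeft_apply, mul_assoc]; exact hmain y hy)
      intro y hy
      have := Submodule.mem_comap.mp (hle hy)
      rwa [LinearMap.mulLeft_apply] at this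
    intro z hz
    rw [vOp, Submodule.mem_div_iff_forall_mul_mem] at hz
    have hz' := hz _ htx
    rw [Submodule.one_eq_range] at hz'
    obtain ⟨b, hb⟩ := hz'
    rw [mem_locAtM_iff]
    refine ⟨b, t, ht, ?_⟩
    rw [IsLocalization.eq_mk'_iff_mul_eq]
    simp only [Algebra.linearMap_apply] at hb
    show x * z * algebraMap D K t = algebraMap D K b
    rw [hb]; ring
  · apply locDiv_anti
    intro y hy
    rw [vOp, Submodule.mem_div_iff_forall_mul_mem]
    intro w hw
    rw [Submodule.mem_div_iff_forall_mul_mem] at hw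
    rw [mul_comm]
    exact hw y hy

/-- `(F D_P)^{v_{D_P}} = (F^{v_D} D_P)^{v_{D_P}}` for every nonzero finitely
generated fractional ideal `F` and every prime `P`. -/
theorem stmt10 (F : Submodule D K) (hFG : F.FG) (hF : F ≠ ⊥) (P : Ideal D) (hP : P.IsPrime) :
    vOp (locAtM D K P hP) (F * locAtM D K P hP) =
      vOp (locAtM D K P hP) (vOp 1 F * locAtM D K P hP) := by
  rw [vOp, vOp, div_mul_locAtM, div_mul_locAtM, div_vOp_eq F hFG]
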